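/- Let Φ : ℝ^n → ℝ^p and Γ : ℝ^n → (Fin m → ℝ^b) be linear maps, y ∈ ℝ^p, x̂ ∈ ℝ^n, Î = {i : (Γx̂)_i ≠ 0}, and define η̄ ∈ (Fin m → ℝ^b) by η̄_i = (Γx̂)_i/‖(Γx̂)_i‖₂ for i ∈ Î and η̄_i = 0 for i ∉ Î. Then the set of minimizers of x ↦ (1/2)‖Φx − y‖² over the constraint set {x : ∀ i, ‖(Γx)_i‖₂ − ⟨η̄_i, (Γx)_i⟩ = 0} equals the set of minimizers of x ↦ (1/2)‖Φx − y‖² over the constraint set {x : (∀ i ∉ Î, (Γx)_i = 0) and (∀ i ∈ Î, ∃ α ≥ 0, (Γx)_i = α·(Γx̂)_i)}; indeed the two constraint sets are equal. -/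

import Mathlib

open RealInnerProductSpace

theorem stmt_8 {n p m b : ℕ}
    (Φ : EuclideanSpace ℝ (Fin n) →ₗ[ℝ] EuclideanSpace ℝ (Fin p))
    (Γ : EuclideanSpace ℝ (Fin n) →ₗ[ℝ] (Fin m → EuclideanSpace ℝ (Fin b)))
    (y : EuclideanSpace ℝ (Fin p)) (xhat : EuclideanSpace ℝ (Fin n))
    (ηbar : Fin m → EuclideanSpace ℝ (Fin b))
    (hη1 : ∀ i, Γ xhat i ≠ 0 → ηbar i = ‖Γ xhat i‖⁻¹ • Γ xhat i)
    (hη2 : ∀ i, Γ xhat i = 0 → ηbar i = 0)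
    (S1 S2 : Set (EuclideanSpace ℝ (Fin n)))
    (hS1 : S1 = {x | ∀ i, ‖Γ x i‖ - ⟪ηbar i, Γ x i⟫ = 0})
    (hS2 : S2 = {x | (∀ i, Γ xhat i = 0 → Γ x i = 0) ∧
      (∀ i, Γ xhat i ≠ 0 → ∃ α : ℝ, 0 ≤ α ∧ Γ x i = α • Γ xhat i)}) :
    S1 = S2 ∧
    {x ∈ S1 | ∀ x' ∈ S1, (1/2) * ‖Φ x - y‖^2 ≤ (1/2) * ‖Φ x' - y‖^2} =
      {x ∈ S2 | ∀ x' ∈ S2, (1/2) * ‖Φ x - y‖^2 ≤ (1/2) * ‖Φ x' - y‖^2} := by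
  have hset : S1 = S2 := by
    rw [hS1, hS2]
    ext x
    simp only [Set.mem_setOf_eq]
    constructor
    · intro h
      constructor
      · intro i hi
        have := h i
        rw [hη2 i hi] at this
        simpa using this
      · intro i hi
        have hnorm : ‖ηbar i‖ = 1 := by
          rw [hη1 i hi, norm_smul, norm_inv, norm_norm,
            inv_mul_cancel₀ (norm_ne_zero_iff.mpr hi)]
        have heq : ⟪ηbar i, Γ x i⟫ = ‖ηbar i‖ * ‖Γ x i‖ := by
          rw [hnorm, one_mul]; linarith [h i]
        have := (inner_eq_norm_mul_iff_real).mp heq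
        rw [hnorm, one_smul] at this
        rw [hη1 i hi, smul_smul] at this
        exact ⟨‖Γ x i‖ * ‖Γ xhat i‖⁻¹, by positivity, this.symm⟩
    · rintro ⟨h0, hpos⟩ i
      by_cases hi : Γ xhat i = 0
      · rw [h0 i hi, hη2 i hi]
        simp
      · obtain ⟨α, hα, heq⟩ := hpos i hi
        rw [heq, hη1 i hi, norm_smul, real_inner_smul_left, real_inner_smul_right,
          real_inner_self_eq_norm_sq]
        have hn : ‖Γ xhat i‖ ≠ 0 := norm_ne_zero_iff.mpr hi
        field_simp
        rw [Real.norm_of_nonneg hα]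
        ring
  exact ⟨hset, by rw [hset]⟩
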